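/- Let α > 0, σ² > 0, δ > 0, and let η > 1/(4·(1+σ²)^{1+2α}). Then every differentiable function λ_B : [0,∞) → ℝ with λ_B(0) = δ that satisfies λ_B'(t) = λ_B(t)·(−(1+σ²)^{1+2α}·|λ_B(t)|^{4α} + |λ_B(t)|^{2α} − η) for all t ≥ 0 converges to 0 as t → ∞. -/

import Mathlib

open Filter

/-- for the DirectSet(α) variant with predictor
`W_p = (W E[x₁x₁ᵀ] Wᵀ)^α`, the nuisance eigenvalue dynamics
`λ_B' = λ_B (−(1+σ²)^{1+2α}|λ_B|^{4α} + |λ_B|^{2α} − η)` with `λ_B(0) = δ > 0`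
converge to `0` as soon as `η > 1/(4(1+σ²)^{1+2α})`. -/
theorem directset_variant_nuisance_eigen_to_zero
    (α σ2 δ η : ℝ) (hα : 0 < α) (hσ : 0 < σ2) (hδ : 0 < δ)
    (hη : 1 / (4 * (1 + σ2) ^ (1 + 2 * α)) < η)
    (lamB : ℝ → ℝ) (hdiff : Differentiable ℝ lamB) (h0 : lamB 0 = δ)
    (hode : ∀ t : ℝ, 0 ≤ t →
      deriv lamB t =
        lamB t * (-(1 + σ2) ^ (1 + 2 * α) * |lamB t| ^ (4 * α)
          + |lamB t| ^ (2 * α) - η)) :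
    Tendsto lamB atTop (nhds 0) := by
  set c : ℝ := (1 + σ2) ^ (1 + 2 * α) with hc
  have hcpos : 0 < c := Real.rpow_pos_of_pos (by linarith) _
  set k : ℝ := η - 1 / (4 * c) with hk
  have hkpos : 0 < k := by
    have : 1 / (4 * c) < η := hη
    simp only [hk]; linarith
  set w : ℝ → ℝ := fun t => lamB t ^ 2 * Real.exp (2 * k * t) with hw
  have hwdiff : ∀ t : ℝ, HasDerivAt w
      (2 * lamB t * deriv lamB t * Real.exp (2 * k * t)
        + lamB t ^ 2 * (Real.exp (2 * k * t) * (2 * k))) t := by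
    intro t
    have hl : HasDerivAt lamB (deriv lamB t) t := (hdiff t).hasDerivAt
    have h1 := hl.fun_pow 2
    have h2 : HasDerivAt (fun t => Real.exp (2 * k * t))
        (Real.exp (2 * k * t) * (2 * k)) t := by
      have := ((hasDerivAt_id t).const_mul (2 * k)).exp
      simpa [mul_comm] using this
    have this : HasDerivAt (fun x => lamB x ^ 2 * Real.exp (2 * k * x)) _ t := h1.fun_mul h2
    convert this using 1
    ring
  have hmono : AntitoneOn w (Set.Ici (0:ℝ)) := by
    apply antitoneOn_of_deriv_nonpos (convex_Ici 0)
    · exact fun t _ => (hwdiff t).continuousAt.continuousWithinAt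
    · exact fun t _ => (hwdiff t).differentiableAt.differentiableWithinAt
    · intro t ht
      rw [interior_Ici] at ht
      rw [(hwdiff t).deriv]
      have hode' := hode t (le_of_lt ht)
      set A := |lamB t| ^ (2 * α) with hA
      have hAnn : 0 ≤ A := Real.rpow_nonneg (abs_nonneg _) _
      have h4 : |lamB t| ^ (4 * α) = A * A := by
        rw [hA, ← Real.rpow_add' (abs_nonneg _) (by positivity)]
        ring_nf
      rw [h4] at hode'
      rw [hode']
      have hexp : 0 < Real.exp (2 * k * t) := Real.exp_pos _
      have hkey : -c * (A * A) + A - η + k ≤ 0 := by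
        have hk' : k = η - 1 / (4 * c) := hk
        rw [hk']
        have hne : (4 * c) ≠ 0 := by positivity
        have heq : -c * (A * A) + A - η + (η - 1 / (4 * c))
            = -((2 * c * A - 1) ^ 2 / (4 * c)) := by
          field_simp
          ring
        rw [heq]
        exact neg_nonpos.mpr (div_nonneg (sq_nonneg _) (by positivity))
      nlinarith [mul_nonneg hexp.le (sq_nonneg (lamB t)),
        mul_nonpos_of_nonneg_of_nonpos
          (mul_nonneg hexp.le (sq_nonneg (lamB t))) hkey]
  have hbound : ∀ t : ℝ, 0 ≤ t → |lamB t| ≤ δ * Real.exp (-(k * t)) := by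
    intro t ht
    have h1 : w t ≤ w 0 := hmono Set.self_mem_Ici ht ht
    have hw0 : w 0 = δ ^ 2 := by simp [hw, h0]
    have hexp : 0 < Real.exp (2 * k * t) := Real.exp_pos _
    have h2 : lamB t ^ 2 ≤ δ ^ 2 * Real.exp (-(k * t)) ^ 2 := by
      have hrw : Real.exp (-(k * t)) ^ 2 = (Real.exp (2 * k * t))⁻¹ := by
        rw [← Real.exp_nat_mul, ← Real.exp_neg]
        congr 1
        push_cast
        ring
      rw [hrw, show δ ^ 2 * (Real.exp (2 * k * t))⁻¹
          = δ ^ 2 / Real.exp (2 * k * t) from by ring,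
        le_div_iff₀ hexp]
      calc lamB t ^ 2 * Real.exp (2 * k * t) = w t := rfl
        _ ≤ w 0 := h1
        _ = δ ^ 2 := hw0
    have habs : |lamB t| ^ 2 ≤ (δ * Real.exp (-(k * t))) ^ 2 := by
      rw [sq_abs]; nlinarith [Real.exp_pos (-(k * t))]
    nlinarith [abs_nonneg (lamB t), mul_pos hδ (Real.exp_pos (-(k * t)))]
  rw [tendsto_zero_iff_norm_tendsto_zero]
  have hg : Tendsto (fun t : ℝ => δ * Real.exp (-(k * t))) atTop (nhds 0) := by
    have h1 : Tendsto (fun t : ℝ => k * t) atTop atTop :=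
      Tendsto.const_mul_atTop hkpos tendsto_id
    have h2 : Tendsto (fun t : ℝ => Real.exp (-(k * t))) atTop (nhds 0) :=
      Real.tendsto_exp_atBot.comp (tendsto_neg_atBot_iff.mpr h1)
    simpa using h2.const_mul δ
  apply squeeze_zero' (Eventually.of_forall fun t => norm_nonneg _)
    _ hg
  filter_upwards [eventually_ge_atTop (0:ℝ)] with t ht
  simpa using hbound t ht
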